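/- Lipschitz continuity of SaSTL robustness in the signal: for every SaSTL formula φ, any two spatial-temporal signals ω and ω' over the same time and spatial domains, every sample time t in 𝕋 and every location l in L, one has |ρ(φ,ω,t,l) − ρ(φ,ω',t,l)| ≤ ‖ω − ω'‖_∞. -/

import Mathlib

open scoped Classical

noncomputable section

/-- Aggregation operations of SaSTL. -/
inductive AggOp : Type
  | max | min | sum | avg

/-- SaSTL formulas over a set of signal variables `Var` and a set of
spatial-domain indices `Dom`.  `untl I φ ψ` is the bounded until `φ U_I ψ`,
`agg op D x c` is the spatial aggregation atom `A_D^op x > c`, and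
`cnt op D φ c` is the spatial counting formula `C_D^op φ > c`. -/
inductive SaSTL (Var Dom : Type) : Type
  | atom : Var → ℝ → SaSTL Var Dom
  | not  : SaSTL Var Dom → SaSTL Var Dom
  | and  : SaSTL Var Dom → SaSTL Var Dom → SaSTL Var Dom
  | untl : Set ℝ → SaSTL Var Dom → SaSTL Var Dom → SaSTL Var Dom
  | agg  : AggOp → Dom → Var → ℝ → SaSTL Var Dom
  | cnt  : AggOp → Dom → SaSTL Var Dom → ℝ → SaSTL Var Dom

/-- A monitoring frame: a finite nonempty set `T` of real sample times, and,
for every spatial-domain index `D` and location `l`, a finite nonempty set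
`nbr D l` of neighbouring locations (the set `L_D^l`). -/
structure Frame (Dom Loc : Type) where
  T : Finset ℝ
  T_ne : T.Nonempty
  nbr : Dom → Loc → Finset Loc
  nbr_ne : ∀ D l, (nbr D l).Nonempty

/-- The `k`-th largest element of a finite multiset of reals: the element at
position `k` when the entries are listed in non-increasing order. -/
def kthLargest (m : Multiset ℝ) (k : ℕ) : ℝ :=
  (Multiset.sort m (· ≤ ·)).getD (Multiset.card m - k) 0

variable {Var Dom Loc : Type}

/-- Boolean satisfaction `(ω, t, l) ⊨ φ`. -/
def sat (F : Frame Dom Loc) (ω : Var → ℝ → Loc → ℝ) :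
    SaSTL Var Dom → ℝ → Loc → Prop
  | .atom x c, t, l => c < ω x t l
  | .not φ, t, l => ¬ sat F ω φ t l
  | .and φ ψ, t, l => sat F ω φ t l ∧ sat F ω ψ t l
  | .untl I φ ψ, t, l =>
      ∃ t' ∈ F.T, t' - t ∈ I ∧ sat F ω ψ t' l ∧
        ∀ t'' ∈ F.T, t < t'' → t'' < t' → sat F ω φ t'' l
  | .agg op D x c, t, l =>
      (match op with
        | .max => (F.nbr D l).sup' (F.nbr_ne D l) (fun l' => ω x t l')
        | .min => (F.nbr D l).inf' (F.nbr_ne D l) (fun l' => ω x t l')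
        | .sum => ∑ l' ∈ F.nbr D l, ω x t l'
        | .avg => (∑ l' ∈ F.nbr D l, ω x t l') / (F.nbr D l).card) > c
  | .cnt op D φ c, t, l =>
      (match op with
        | .max => (F.nbr D l).sup' (F.nbr_ne D l)
            (fun l' => if sat F ω φ t l' then (1 : ℝ) else 0)
        | .min => (F.nbr D l).inf' (F.nbr_ne D l)
            (fun l' => if sat F ω φ t l' then (1 : ℝ) else 0)
        | .sum => ∑ l' ∈ F.nbr D l, (if sat F ω φ t l' then (1 : ℝ) else 0)
        | .avg => (∑ l' ∈ F.nbr D l, (if sat F ω φ t l' then (1 : ℝ) else 0)) /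
            (F.nbr D l).card) > c

/-- Quantitative semantics (robustness) `ρ(φ, ω, t, l)`. -/
def rho (F : Frame Dom Loc) (ω : Var → ℝ → Loc → ℝ) :
    SaSTL Var Dom → ℝ → Loc → ℝ
  | .atom x c, t, l => ω x t l - c
  | .not φ, t, l => - rho F ω φ t l
  | .and φ ψ, t, l => min (rho F ω φ t l) (rho F ω ψ t l)
  | .untl I φ ψ, t, l =>
      if h : (F.T.filter (fun s => s - t ∈ I)).Nonempty then
        (F.T.filter (fun s => s - t ∈ I)).sup' h (fun t' =>
          if h' : (F.T.filter (fun s => t < s ∧ s < t')).Nonempty then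
            min (rho F ω ψ t' l)
              ((F.T.filter (fun s => t < s ∧ s < t')).inf' h'
                (fun t'' => rho F ω φ t'' l))
          else rho F ω ψ t' l)
      else 0
  | .agg op D x c, t, l =>
      match op with
      | .max => (F.nbr D l).sup' (F.nbr_ne D l) (fun l' => ω x t l') - c
      | .min => (F.nbr D l).inf' (F.nbr_ne D l) (fun l' => ω x t l') - c
      | .sum => ((∑ l' ∈ F.nbr D l, ω x t l') - c) / (F.nbr D l).card
      | .avg => (∑ l' ∈ F.nbr D l, ω x t l') / (F.nbr D l).card - c
  | .cnt op D φ c, t, l =>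
      match op with
      | .max => (F.nbr D l).sup' (F.nbr_ne D l) (fun l' => rho F ω φ t l')
      | .min => (F.nbr D l).inf' (F.nbr_ne D l) (fun l' => rho F ω φ t l')
      | .sum => kthLargest ((F.nbr D l).val.map (fun l' => rho F ω φ t l'))
          (⌊c⌋ + 1).toNat
      | .avg => kthLargest ((F.nbr D l).val.map (fun l' => rho F ω φ t l'))
          (⌊c * (F.nbr D l).card⌋ + 1).toNat

/-- Well-formedness assumptions on formulas: every until-interval is a bounded
interval of positive reals whose shifted intersection with the sample times is
nonempty, and the constants in counting subformulas satisfy `0 ≤ c < 1` for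
`op ∈ {max, min, avg}` and `0 ≤ c < |L_D^l|` for `op = sum`. -/
def WellFormed (F : Frame Dom Loc) : SaSTL Var Dom → Prop
  | .atom _ _ => True
  | .not φ => WellFormed F φ
  | .and φ ψ => WellFormed F φ ∧ WellFormed F ψ
  | .untl I φ ψ =>
      (I ⊆ Set.Ioi 0 ∧ BddAbove I ∧ I.OrdConnected) ∧
      (∀ t ∈ F.T, (F.T.filter (fun s => s - t ∈ I)).Nonempty) ∧
      WellFormed F φ ∧ WellFormed F ψ
  | .agg _ _ _ _ => True
  | .cnt op D φ c =>
      WellFormed F φ ∧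
      (match op with
        | .sum => 0 ≤ c ∧ ∀ l : Loc, c < (F.nbr D l).card
        | _ => 0 ≤ c ∧ c < 1)

/-- Sup-norm distance `‖ω − ω'‖_∞` between two spatial-temporal signals:
the maximum over all `(x, t, l) ∈ X × 𝕋 × L` of `|ω(x,t,l) − ω'(x,t,l)|`. -/
def supDist [Fintype Var] [Nonempty Var] [Fintype Loc] [Nonempty Loc]
    (F : Frame Dom Loc) (ω ω' : Var → ℝ → Loc → ℝ) : ℝ :=
  (Finset.univ : Finset Var).sup' Finset.univ_nonempty fun x =>
    F.T.sup' F.T_ne fun t =>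
      (Finset.univ : Finset Loc).sup' Finset.univ_nonempty fun l =>
        |ω x t l - ω' x t l|


section Helpers

lemma countP_mono_mem {α : Type*} (s : Multiset α) (p q : α → Prop)
    (h : ∀ a ∈ s, p a → q a) : Multiset.countP p s ≤ Multiset.countP q s := by
  induction s using Multiset.induction_on with
  | empty => simp
  | cons a s ih =>
    simp only [Multiset.countP_cons]
    have h1 : Multiset.countP p s ≤ Multiset.countP q s :=
      ih (fun x hx => h x (Multiset.mem_cons_of_mem hx))
    have h2 : (if p a then 1 else 0) ≤ (if q a then 1 else 0) := by
      by_cases hp : p a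
      · simp [hp, h a (Multiset.mem_cons_self a s) hp]
      · simp [hp]
    omega

lemma sorted_get_le (L : List ℝ) (hL : L.Pairwise (· ≤ ·)) (i : ℕ) (hi : i < L.length) (a : ℝ)
    (hc : i < Multiset.countP (fun x => x ≤ a) (L : Multiset ℝ)) : L[i] ≤ a := by
  by_contra hlt
  push_neg at hlt
  rw [Multiset.coe_countP] at hc
  have hsplit := List.take_append_drop i L
  have : List.countP (fun b => decide (b ≤ a)) L ≤ i := by
    calc List.countP (fun b => decide (b ≤ a)) L
        = List.countP _ (List.take i L) + List.countP _ (List.drop i L) := by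
          rw [← List.countP_append, hsplit]
      _ ≤ i + 0 := by
          refine Nat.add_le_add ?_ ?_
          · exact le_trans List.countP_le_length (by simp)
          · refine Nat.le_of_eq (List.countP_eq_zero.mpr ?_)
            intro x hx
            rcases List.mem_iff_getElem.mp hx with ⟨j, hj, rfl⟩
            have hij : i + j < L.length := by
              simp only [List.length_drop] at hj; omega
            have : L[i] ≤ L[i + j] := by
              have := hL.rel_get_of_le (a := ⟨i, hi⟩) (b := ⟨i + j, hij⟩) (by simp)
              simpa using this
            simp only [List.getElem_drop]
            simp only [decide_eq_true_eq]
            push_neg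
            linarith
      _ = i := by omega
  omega

lemma countP_ge_of_sorted (M : List ℝ) (hM : M.Pairwise (· ≤ ·)) (i : ℕ) (hi : i < M.length) :
    i + 1 ≤ Multiset.countP (fun x => x ≤ M[i]) (M : Multiset ℝ) := by
  rw [Multiset.coe_countP]
  set a := M[i] with ha
  have hsplit := List.take_append_drop (i + 1) M
  have htl : (List.take (i + 1) M).length = i + 1 := by simp; omega
  have h1 : List.countP (fun b => decide (b ≤ a)) (List.take (i + 1) M) =
      (List.take (i + 1) M).length := by
    rw [List.countP_eq_length]
    intro x hx
    rcases List.mem_iff_getElem.mp hx with ⟨j, hj, rfl⟩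
    rw [htl] at hj
    have hjL : j < M.length := by omega
    have : M[j] ≤ a := by
      rw [ha]
      have := hM.rel_get_of_le (a := ⟨j, hjL⟩) (b := ⟨i, hi⟩) (by simp; omega)
      simpa using this
    simp only [List.getElem_take, decide_eq_true_eq]
    exact this
  have h2 : List.countP (fun b => decide (b ≤ a)) (List.take (i + 1) M) ≤
      List.countP (fun b => decide (b ≤ a)) M := by
    conv_rhs => rw [← hsplit]
    rw [List.countP_append]; omega
  omega

lemma kthLargest_le_aux {α : Type*} (s : Multiset α) (f g : α → ℝ) (d : ℝ)
    (hd : ∀ x ∈ s, f x ≤ g x + d) (k : ℕ) (hk1 : 1 ≤ k) (hk2 : k ≤ Multiset.card s) :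
    kthLargest (s.map f) k ≤ kthLargest (s.map g) k + d := by
  set L := Multiset.sort (s.map f) (· ≤ ·) with hLdef
  set M := Multiset.sort (s.map g) (· ≤ ·) with hMdef
  have hLlen : L.length = Multiset.card s := by
    rw [hLdef, Multiset.length_sort, Multiset.card_map]
  have hMlen : M.length = Multiset.card s := by
    rw [hMdef, Multiset.length_sort, Multiset.card_map]
  set i := Multiset.card s - k with hidef
  have hiL : i < L.length := by omega
  have hiM : i < M.length := by omega
  have hgoal : kthLargest (s.map f) k = L[i] := by
    rw [kthLargest, ← hLdef, Multiset.card_map, ← hidef, List.getD_eq_getElem L 0 hiL]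
  have hgoal' : kthLargest (s.map g) k = M[i] := by
    rw [kthLargest, ← hMdef, Multiset.card_map, ← hidef, List.getD_eq_getElem M 0 hiM]
  rw [hgoal, hgoal']
  apply sorted_get_le L (Multiset.pairwise_sort _ _) i hiL (M[i] + d)
  have hLcoe : (L : Multiset ℝ) = s.map f := Multiset.sort_eq _ _
  have hMcoe : (M : Multiset ℝ) = s.map g := Multiset.sort_eq _ _
  have c1 : i + 1 ≤ Multiset.countP (fun x => x ≤ M[i]) (M : Multiset ℝ) :=
    countP_ge_of_sorted M (Multiset.pairwise_sort _ _) i hiM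
  rw [hMcoe, Multiset.countP_map] at c1
  have c2 : Multiset.card (Multiset.filter (fun l => g l ≤ M[i]) s) ≤
      Multiset.card (Multiset.filter (fun l => f l ≤ M[i] + d) s) := by
    rw [← Multiset.countP_eq_card_filter, ← Multiset.countP_eq_card_filter]
    exact countP_mono_mem s _ _ (fun a ha hga => by
      have := hd a ha; linarith)
  rw [hLcoe, Multiset.countP_map]
  omega

lemma kthLargest_lip {α : Type*} (s : Multiset α) (f g : α → ℝ) (d : ℝ)
    (hd : ∀ x ∈ s, |f x - g x| ≤ d) (k : ℕ) (hk1 : 1 ≤ k) (hk2 : k ≤ Multiset.card s) :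
    |kthLargest (s.map f) k - kthLargest (s.map g) k| ≤ d := by
  have h1 := kthLargest_le_aux s f g d
    (fun x hx => by have := abs_sub_le_iff.mp (hd x hx); linarith [this.1]) k hk1 hk2
  have h2 := kthLargest_le_aux s g f d
    (fun x hx => by have := abs_sub_le_iff.mp (hd x hx); linarith [this.2]) k hk1 hk2
  rw [abs_sub_le_iff]
  constructor <;> linarith

lemma sup'_lip {α : Type*} (s : Finset α) (h : s.Nonempty) (f g : α → ℝ) (d : ℝ)
    (hd : ∀ x ∈ s, |f x - g x| ≤ d) : |s.sup' h f - s.sup' h g| ≤ d := by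
  rw [abs_sub_le_iff]
  constructor <;>
  · rw [sub_le_iff_le_add]
    apply Finset.sup'_le
    intro x hx
    have h1 := abs_sub_le_iff.mp (hd x hx)
    have h2 := Finset.le_sup' f hx
    have h3 := Finset.le_sup' g hx
    try linarith [h1.1, h3]
    try linarith [h1.2, h2]

lemma inf'_lip {α : Type*} (s : Finset α) (h : s.Nonempty) (f g : α → ℝ) (d : ℝ)
    (hd : ∀ x ∈ s, |f x - g x| ≤ d) : |s.inf' h f - s.inf' h g| ≤ d := by
  rw [abs_sub_le_iff]
  obtain ⟨a, ha, hfa⟩ := Finset.exists_mem_eq_inf' h f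
  obtain ⟨b, hb, hgb⟩ := Finset.exists_mem_eq_inf' h g
  constructor
  · have h1 := abs_sub_le_iff.mp (hd b hb)
    have h2 := Finset.inf'_le f hb
    rw [hgb]; linarith [h1.1]
  · have h1 := abs_sub_le_iff.mp (hd a ha)
    have h2 := Finset.inf'_le g ha
    rw [hfa]; linarith [h1.2]

lemma sum_lip {α : Type*} (s : Finset α) (f g : α → ℝ) (d : ℝ)
    (hd : ∀ x ∈ s, |f x - g x| ≤ d) :
    |(∑ x ∈ s, f x) - ∑ x ∈ s, g x| ≤ s.card * d := by
  rw [← Finset.sum_sub_distrib]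
  calc |∑ x ∈ s, (f x - g x)| ≤ ∑ x ∈ s, |f x - g x| := Finset.abs_sum_le_sum_abs _ _
    _ ≤ ∑ _x ∈ s, d := Finset.sum_le_sum hd
    _ = s.card * d := by rw [Finset.sum_const, nsmul_eq_mul]

lemma min_lip (a b c e d : ℝ) (h1 : |a - c| ≤ d) (h2 : |b - e| ≤ d) :
    |min a b - min c e| ≤ d :=
  le_trans (abs_min_sub_min_le_max a b c e) (max_le h1 h2)

lemma abs_le_supDist {Var Dom Loc : Type} [Fintype Var] [Nonempty Var] [Fintype Loc]
    [Nonempty Loc] (F : Frame Dom Loc) (ω ω' : Var → ℝ → Loc → ℝ)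
    (x : Var) (t : ℝ) (ht : t ∈ F.T) (l : Loc) :
    |ω x t l - ω' x t l| ≤ supDist F ω ω' := by
  unfold supDist
  refine le_trans ?_ (Finset.le_sup'
    (f := fun x => F.T.sup' F.T_ne fun t => (Finset.univ : Finset Loc).sup'
      Finset.univ_nonempty fun l => |ω x t l - ω' x t l|) (Finset.mem_univ x))
  refine le_trans ?_ (Finset.le_sup'
    (f := fun t => (Finset.univ : Finset Loc).sup' Finset.univ_nonempty
      fun l => |ω x t l - ω' x t l|) ht)
  exact Finset.le_sup' (f := fun l => |ω x t l - ω' x t l|) (Finset.mem_univ l)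

end Helpers

/-- **Lipschitz continuity of SaSTL robustness in the signal**: for every
SaSTL formula `φ`, any two spatial-temporal signals `ω`, `ω'` over the same
time and spatial domains, every sample time `t ∈ 𝕋` and every location
`l ∈ L`, one has `|ρ(φ,ω,t,l) − ρ(φ,ω',t,l)| ≤ ‖ω − ω'‖_∞`. -/
theorem sastl_robustness_lipschitz
    [Fintype Var] [Nonempty Var] [Fintype Loc] [Nonempty Loc]
    (F : Frame Dom Loc) (ω ω' : Var → ℝ → Loc → ℝ)
    (φ : SaSTL Var Dom) (hφ : WellFormed F φ)
    (t : ℝ) (ht : t ∈ F.T) (l : Loc) :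
    |rho F ω φ t l - rho F ω' φ t l| ≤ supDist F ω ω' := by
  induction φ generalizing t ht l with
  | atom x c =>
      simp only [rho]
      have := abs_le_supDist F ω ω' x t ht l
      have he : ω x t l - c - (ω' x t l - c) = ω x t l - ω' x t l := by ring
      rw [he]; exact this
  | not φ ih =>
      simp only [rho]
      have he : -rho F ω φ t l - -rho F ω' φ t l = -(rho F ω φ t l - rho F ω' φ t l) := by
        ring
      rw [he, abs_neg]; exact ih hφ t ht l
  | and φ ψ ihφ ihψ =>
      simp only [rho]
      exact min_lip _ _ _ _ _ (ihφ hφ.1 t ht l) (ihψ hφ.2 t ht l)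
  | untl I φ ψ ihφ ihψ =>
      obtain ⟨hI, hne, hwφ, hwψ⟩ := hφ
      simp only [rho]
      rw [dif_pos (hne t ht), dif_pos (hne t ht)]
      apply sup'_lip
      intro t' ht'
      have ht'T : t' ∈ F.T := (Finset.mem_filter.mp ht').1
      by_cases h' : (F.T.filter (fun s => t < s ∧ s < t')).Nonempty
      · rw [dif_pos h', dif_pos h']
        refine min_lip _ _ _ _ _ (ihψ hwψ t' ht'T l) ?_
        apply inf'_lip
        intro t'' ht''
        exact ihφ hwφ t'' (Finset.mem_filter.mp ht'').1 l
      · rw [dif_neg h', dif_neg h']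
        exact ihψ hwψ t' ht'T l
  | agg op D x c =>
      have hptw : ∀ l' ∈ F.nbr D l, |ω x t l' - ω' x t l'| ≤ supDist F ω ω' :=
        fun l' _ => abs_le_supDist F ω ω' x t ht l'
      have hcard : (0 : ℝ) < (F.nbr D l).card := by
        exact_mod_cast Finset.card_pos.mpr (F.nbr_ne D l)
      cases op with
      | max =>
          simp only [rho]
          have := sup'_lip (F.nbr D l) (F.nbr_ne D l) _ _ _ hptw
          have he : (F.nbr D l).sup' (F.nbr_ne D l) (fun l' => ω x t l') - c -
              ((F.nbr D l).sup' (F.nbr_ne D l) (fun l' => ω' x t l') - c) =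
              (F.nbr D l).sup' (F.nbr_ne D l) (fun l' => ω x t l') -
              (F.nbr D l).sup' (F.nbr_ne D l) (fun l' => ω' x t l') := by ring
          rw [he]; exact this
      | min =>
          simp only [rho]
          have := inf'_lip (F.nbr D l) (F.nbr_ne D l) _ _ _ hptw
          have he : (F.nbr D l).inf' (F.nbr_ne D l) (fun l' => ω x t l') - c -
              ((F.nbr D l).inf' (F.nbr_ne D l) (fun l' => ω' x t l') - c) =
              (F.nbr D l).inf' (F.nbr_ne D l) (fun l' => ω x t l') -
              (F.nbr D l).inf' (F.nbr_ne D l) (fun l' => ω' x t l') := by ring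
          rw [he]; exact this
      | sum =>
          simp only [rho]
          have hsum := sum_lip (F.nbr D l) _ _ _ hptw
          have he : ((∑ l' ∈ F.nbr D l, ω x t l') - c) / (F.nbr D l).card -
              ((∑ l' ∈ F.nbr D l, ω' x t l') - c) / (F.nbr D l).card =
              ((∑ l' ∈ F.nbr D l, ω x t l') - ∑ l' ∈ F.nbr D l, ω' x t l') /
                (F.nbr D l).card := by ring
          rw [he, abs_div, abs_of_pos hcard, div_le_iff₀ hcard]
          calc |(∑ l' ∈ F.nbr D l, ω x t l') - ∑ l' ∈ F.nbr D l, ω' x t l'|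
              ≤ (F.nbr D l).card * supDist F ω ω' := hsum
            _ = supDist F ω ω' * (F.nbr D l).card := by ring
      | avg =>
          simp only [rho]
          have hsum := sum_lip (F.nbr D l) _ _ _ hptw
          have he : (∑ l' ∈ F.nbr D l, ω x t l') / (F.nbr D l).card - c -
              ((∑ l' ∈ F.nbr D l, ω' x t l') / (F.nbr D l).card - c) =
              ((∑ l' ∈ F.nbr D l, ω x t l') - ∑ l' ∈ F.nbr D l, ω' x t l') /
                (F.nbr D l).card := by ring
          rw [he, abs_div, abs_of_pos hcard, div_le_iff₀ hcard]
          calc |(∑ l' ∈ F.nbr D l, ω x t l') - ∑ l' ∈ F.nbr D l, ω' x t l'|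
              ≤ (F.nbr D l).card * supDist F ω ω' := hsum
            _ = supDist F ω ω' * (F.nbr D l).card := by ring
  | cnt op D φ c ih =>
      obtain ⟨hw, hc⟩ := hφ
      have hptw : ∀ l' ∈ F.nbr D l, |rho F ω φ t l' - rho F ω' φ t l'| ≤ supDist F ω ω' :=
        fun l' _ => ih hw t ht l'
      have hcard0 : 0 < (F.nbr D l).card := Finset.card_pos.mpr (F.nbr_ne D l)
      have hmcard : Multiset.card (F.nbr D l).val = (F.nbr D l).card := rfl
      cases op with
      | max =>
          simp only [rho]
          exact sup'_lip (F.nbr D l) (F.nbr_ne D l) _ _ _ hptw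
      | min =>
          simp only [rho]
          exact inf'_lip (F.nbr D l) (F.nbr_ne D l) _ _ _ hptw
      | sum =>
          simp only [rho]
          obtain ⟨hc0, hcu⟩ := hc
          have hf0 : (0 : ℤ) ≤ ⌊c⌋ := Int.floor_nonneg.mpr hc0
          have hfu : ⌊c⌋ < ((F.nbr D l).card : ℤ) := by
            rw [Int.floor_lt]; exact_mod_cast hcu l
          apply kthLargest_lip (F.nbr D l).val _ _ _
            (fun l' hl' => hptw l' hl')
          · omega
          · rw [hmcard]; omega
      | avg =>
          simp only [rho]
          obtain ⟨hc0, hcu⟩ := hc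
          have hm0 : (0 : ℝ) ≤ c * (F.nbr D l).card := by positivity
          have hmu : c * (F.nbr D l).card < (F.nbr D l).card := by
            have : (0 : ℝ) < (F.nbr D l).card := by exact_mod_cast hcard0
            nlinarith
          have hf0 : (0 : ℤ) ≤ ⌊c * (F.nbr D l).card⌋ := Int.floor_nonneg.mpr hm0
          have hfu : ⌊c * (F.nbr D l).card⌋ < ((F.nbr D l).card : ℤ) := by
            rw [Int.floor_lt]; exact_mod_cast hmu
          apply kthLargest_lip (F.nbr D l).val _ _ _
            (fun l' hl' => hptw l' hl')
          · omega
          · rw [hmcard]; omega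

end
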